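/- arXiv:2506.07072 — 5 statements merged into one kernel-verified Lean document; each statement's English description precedes it below -/
import Mathlib

section
/- The EKahan scheme is symmetric: for any real d×d matrix A, any map f : ℝ^d → ℝ^d, any h ∈ ℝ and any x, y ∈ ℝ^d, the relation y = exp(hA)·x + h·φ(hA)·(−(1/2)f(x) + 2f((x+y)/2) − (1/2)f(y)) holds if and only if the relation obtained by exchanging x and y and replacing h by −h holds, i.e. x = exp(−hA)·y + (−h)·φ(−hA)·(−(1/2)f(y) + 2f((y+x)/2) − (1/2)f(x)). -/
open Matrix MeasureTheory

/-- `phi V = ∫₀¹ exp((1-τ)V) dτ`, the integral taken entrywise. -/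
noncomputable def phi {d : ℕ} (V : Matrix (Fin d) (Fin d) ℝ) :
    Matrix (Fin d) (Fin d) ℝ :=
  Matrix.of fun i j => ∫ τ in (0:ℝ)..1, NormedSpace.exp ((1 - τ) • V) i j

lemma cont_entry {d : ℕ} (V : Matrix (Fin d) (Fin d) ℝ) (i j : Fin d) :
    Continuous fun τ : ℝ => NormedSpace.exp ((1 - τ) • V) i j := by
  letI : SeminormedRing (Matrix (Fin d) (Fin d) ℝ) := Matrix.linftyOpSemiNormedRing
  letI : NormedRing (Matrix (Fin d) (Fin d) ℝ) := Matrix.linftyOpNormedRing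
  letI : NormedAlgebra ℝ (Matrix (Fin d) (Fin d) ℝ) := Matrix.linftyOpNormedAlgebra
  letI : NormedAlgebra ℚ (Matrix (Fin d) (Fin d) ℝ) := Matrix.linftyOpNormedAlgebra
  have h1 : Continuous fun τ : ℝ => (1 - τ) • V := by fun_prop
  have h2 : Continuous fun τ : ℝ => NormedSpace.exp ((1 - τ) • V) :=
    NormedSpace.exp_continuous.comp h1
  exact (continuous_apply j).comp ((continuous_apply i).comp h2)

lemma phi_eq {d : ℕ} (V : Matrix (Fin d) (Fin d) ℝ) :
    NormedSpace.exp V * phi (-V) = phi V := by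
  ext i j
  simp only [phi, Matrix.mul_apply, Matrix.of_apply]
  calc ∑ k, NormedSpace.exp V i k * ∫ τ in (0:ℝ)..1, NormedSpace.exp ((1 - τ) • (-V)) k j
      = ∑ k, ∫ τ in (0:ℝ)..1,
          NormedSpace.exp V i k * NormedSpace.exp ((1 - τ) • (-V)) k j := by
        simp_rw [intervalIntegral.integral_const_mul]
    _ = ∫ τ in (0:ℝ)..1, ∑ k,
          NormedSpace.exp V i k * NormedSpace.exp ((1 - τ) • (-V)) k j := by
        rw [intervalIntegral.integral_finset_sum]
        intro k _
        exact (continuous_const.mul (cont_entry (-V) k j)).intervalIntegrable _ _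
    _ = ∫ τ in (0:ℝ)..1, NormedSpace.exp (τ • V) i j := by
        apply intervalIntegral.integral_congr
        intro τ _
        have hc : Commute V ((1 - τ) • (-V)) := ((Commute.refl V).neg_right).smul_right _
        have hm : NormedSpace.exp V * NormedSpace.exp ((1 - τ) • (-V)) =
            NormedSpace.exp (τ • V) := by
          rw [← Matrix.exp_add_of_commute _ _ hc]
          congr 1
          module
        simpa [Matrix.mul_apply] using congrFun (congrFun hm i) j
    _ = ∫ τ in (0:ℝ)..1, NormedSpace.exp ((1 - τ) • V) i j := by
        have := intervalIntegral.integral_comp_sub_left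
          (fun s : ℝ => NormedSpace.exp (s • V) i j) 1 (a := 0) (b := 1)
        simp only [sub_zero, sub_self] at this
        exact this.symm

theorem stmt_2 {d : ℕ} (A : Matrix (Fin d) (Fin d) ℝ)
    (f : (Fin d → ℝ) → (Fin d → ℝ)) (h : ℝ) (x y : Fin d → ℝ) :
    (y = NormedSpace.exp (h • A) *ᵥ x +
        h • (phi (h • A) *ᵥ
          ((-(1/2 : ℝ)) • f x + (2 : ℝ) • f ((1/2 : ℝ) • (x + y)) - (1/2 : ℝ) • f y))) ↔
    (x = NormedSpace.exp ((-h) • A) *ᵥ y +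
        (-h) • (phi ((-h) • A) *ᵥ
          ((-(1/2 : ℝ)) • f y + (2 : ℝ) • f ((1/2 : ℝ) • (y + x)) - (1/2 : ℝ) • f x))) := by
  set g : Fin d → ℝ :=
    (-(1/2 : ℝ)) • f x + (2 : ℝ) • f ((1/2 : ℝ) • (x + y)) - (1/2 : ℝ) • f y with hg
  have hg' : ((-(1/2 : ℝ)) • f y + (2 : ℝ) • f ((1/2 : ℝ) • (y + x)) - (1/2 : ℝ) • f x) = g := by
    rw [hg, add_comm y x]; module
  set E := NormedSpace.exp (h • A) with hE
  set E' := NormedSpace.exp ((-h) • A) with hE'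
  have hcomm : Commute (h • A) ((-h) • A) := ((Commute.refl A).smul_left h).smul_right (-h)
  have hEE' : E * E' = 1 := by
    rw [hE, hE', ← Matrix.exp_add_of_commute _ _ hcomm]
    have : h • A + (-h) • A = 0 := by module
    rw [this, NormedSpace.exp_zero]
  have hE'E : E' * E = 1 := by
    rw [hE', hE, ← Matrix.exp_add_of_commute _ _ hcomm.symm]
    have : (-h) • A + h • A = 0 := by module
    rw [this, NormedSpace.exp_zero]
  have hphi : phi (h • A) = E * phi ((-h) • A) := by
    have hneg : -(h • A) = (-h) • A := by module
    rw [hE, ← phi_eq (h • A), hneg]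
  rw [hg', hphi]
  constructor
  · intro hy
    rw [hy, ← Matrix.mulVec_mulVec, ← Matrix.mulVec_smul, ← Matrix.mulVec_add,
      Matrix.mulVec_mulVec, hE'E, Matrix.one_mulVec]
    simp only [neg_smul]
    abel
  · intro hx
    rw [hx, Matrix.mulVec_add, Matrix.mulVec_smul, Matrix.mulVec_mulVec, hEE',
      Matrix.one_mulVec, ← Matrix.mulVec_mulVec]
    simp only [neg_smul]
    abel
end

section
/- Stability/convergence bound for the EKahan scheme: equip ℝ^d with a norm and matrices with the induced operator norm. Let A be a real d×d matrix, f : ℝ^d → ℝ^d Lipschitz with constant L, h > 0, N a natural number, and M_b ≥ 1 a constant such that ‖exp(j h A)‖ ≤ M_b for all 0 ≤ j ≤ N and ‖φ(hA)‖ ≤ M_b, and assume (3/2)·h·L·M_b² < 1. Suppose (x_n)_{0≤n≤N} satisfies the EKahan scheme x_{n+1} = exp(hA)x_n + hφ(hA)K(x_n, x_{n+1}), and (y_n)_{0≤n≤N} satisfies it up to residuals, y_{n+1} = exp(hA)y_n + hφ(hA)K(y_n, y_{n+1}) + r_n with ‖r_n‖ ≤ R for all n, where K(a,b) = −(1/2)f(a)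 + 2f((a+b)/2) − (1/2)f(b). Then for every 0 ≤ n ≤ N, with D = 1 − (3/2)hLM_b², ‖y_n − x_n‖ ≤ exp(3 L M_b² n h / D) · (M_b‖y_0 − x_0‖ + N·M_b·R)/D. -/
open MeasureTheory

/-- `phiL V = ∫₀¹ exp((1-τ)V) dτ` for a continuous linear operator `V`. -/
noncomputable def phiL {E : Type*} [NormedAddCommGroup E] [NormedSpace ℝ E]
    (V : E →L[ℝ] E) : E →L[ℝ] E :=
  ∫ τ in (0:ℝ)..1, NormedSpace.exp ((1 - τ) • V)

open Finset in
private lemma gronwall_aux (u : ℕ → ℝ) (a b : ℝ) (hb : 0 ≤ b) (N : ℕ)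
    (hpos : ∀ n, 0 ≤ u n)
    (H : ∀ n ≤ N, u n ≤ a + b * ∑ k ∈ Finset.range n, u k) :
    ∀ n ≤ N, u n ≤ a * (1+b)^n := by
  intro n
  induction n using Nat.strong_induction_on with
  | _ n ih =>
    intro hn
    have ha : 0 ≤ a := by
      have := H 0 (Nat.zero_le N)
      simp at this
      linarith [hpos 0]
    have hsum : ∑ k ∈ range n, u k ≤ ∑ k ∈ range n, a*(1+b)^k := by
      refine sum_le_sum fun k hk => ?_
      exact ih k (mem_range.mp hk) ((Nat.le_of_lt (mem_range.mp hk)).trans hn)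
    have hg := geom_sum_mul (1+b) n
    calc u n ≤ a + b * ∑ k ∈ range n, u k := H n hn
      _ ≤ a + b * ∑ k ∈ range n, a*(1+b)^k := by nlinarith [hsum]
      _ = a * (1+b)^n := by
          rw [← Finset.mul_sum]
          linear_combination a * hg

set_option synthInstance.maxHeartbeats 1000000 in
private lemma exp_comp {E : Type*} [NormedAddCommGroup E] [NormedSpace ℝ E]
    [FiniteDimensional ℝ E] (A : E →L[ℝ] E) (h : ℝ) (m : ℕ) (v : E) :
    NormedSpace.exp (h • A) (NormedSpace.exp (((m : ℝ) * h) • A) v)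
      = NormedSpace.exp ((((m + 1 : ℕ) : ℝ) * h) • A) v := by
  have hc : Commute (h • A) (((m : ℝ) * h) • A) :=
    ((Commute.refl A).smul_right ((m:ℝ) * h)).smul_left h
  have hadd : h • A + ((m : ℝ) * h) • A = (((m + 1 : ℕ) : ℝ) * h) • A := by
    rw [← add_smul]
    congr 1
    push_cast
    ring
  rw [← hadd, NormedSpace.exp_add_of_commute_of_mem_ball (𝕂 := ℝ) hc
    ((NormedSpace.expSeries_radius_eq_top ℝ (E →L[ℝ] E)).symm ▸ edist_lt_top _ _)
    ((NormedSpace.expSeries_radius_eq_top ℝ (E →L[ℝ] E)).symm ▸ edist_lt_top _ _),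
    ContinuousLinearMap.mul_apply]

private lemma aux_eq_add_sub {E : Type*} [NormedAddCommGroup E] (v w : E) :
    v = w + (v - w) := by abel

private lemma step_identity {E : Type*} [NormedAddCommGroup E] [NormedSpace ℝ E]
    (h : ℝ) (Tyk Txk PKy PKx rk yk1 xk1 : E)
    (hy : yk1 = Tyk + h • PKy + rk) (hx : xk1 = Txk + h • PKx) :
    yk1 - xk1 - (Tyk - Txk) = h • (PKy - PKx) + rk := by
  subst hy hx
  rw [smul_sub]
  abel

private lemma K_decomp {E : Type*} [NormedAddCommGroup E] [NormedSpace ℝ E]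
    (a1 a2 a3 b1 b2 b3 : E) :
    ((-(1/2 : ℝ)) • a1 + (2:ℝ) • a2 - (1/2:ℝ) • a3)
        - ((-(1/2:ℝ)) • b1 + (2:ℝ) • b2 - (1/2:ℝ) • b3)
      = ((-(1/2 : ℝ)) • (a1 - b1) + (2:ℝ) • (a2 - b2)) - (1/2:ℝ) • (a3 - b3) := by
  simp only [smul_sub]
  abel

private lemma mid_decomp {E : Type*} [NormedAddCommGroup E] [NormedSpace ℝ E]
    (a b c d : E) :
    (1/2:ℝ) • (a + b) - (1/2:ℝ) • (c + d) = (1/2:ℝ) • ((a - c) + (b - d)) := by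
  module

set_option maxHeartbeats 1000000 in
set_option synthInstance.maxHeartbeats 1000000 in
theorem stmt_8 {E : Type*} [NormedAddCommGroup E] [NormedSpace ℝ E]
    [FiniteDimensional ℝ E]
    (A : E →L[ℝ] E) (f : E → E) (L h Mb R : ℝ) (N : ℕ)
    (hf : ∀ u v : E, ‖f u - f v‖ ≤ L * ‖u - v‖)
    (hh : 0 < h) (hMb : 1 ≤ Mb)
    (hexp : ∀ j : ℕ, j ≤ N → ‖NormedSpace.exp (((j : ℝ) * h) • A)‖ ≤ Mb)
    (hphi : ‖phiL (h • A)‖ ≤ Mb)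
    (hsmall : (3/2) * h * L * Mb ^ 2 < 1)
    (x y r : ℕ → E)
    (hx : ∀ n < N, x (n + 1) =
      NormedSpace.exp (h • A) (x n) +
        h • phiL (h • A)
          ((-(1/2 : ℝ)) • f (x n) + (2 : ℝ) • f ((1/2 : ℝ) • (x n + x (n + 1))) -
            (1/2 : ℝ) • f (x (n + 1))))
    (hy : ∀ n < N, y (n + 1) =
      NormedSpace.exp (h • A) (y n) +
        h • phiL (h • A)
          ((-(1/2 : ℝ)) • f (y n) + (2 : ℝ) • f ((1/2 : ℝ) • (y n + y (n + 1))) -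
            (1/2 : ℝ) • f (y (n + 1))) + r n)
    (hr : ∀ n < N, ‖r n‖ ≤ R) :
    ∀ n ≤ N,
      ‖y n - x n‖ ≤
        Real.exp (3 * L * Mb ^ 2 * n * h / (1 - (3/2) * h * L * Mb ^ 2)) *
          ((Mb * ‖y 0 - x 0‖ + N * Mb * R) / (1 - (3/2) * h * L * Mb ^ 2)) := by
  have hD : (0:ℝ) < 1 - (3/2) * h * L * Mb ^ 2 := by linarith
  have hMb0 : (0:ℝ) < Mb := by linarith
  have hNR : 0 ≤ (N:ℝ) * Mb * R := by
    rcases Nat.eq_zero_or_pos N with hN | hN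
    · simp [hN]
    · have hR : 0 ≤ R := (norm_nonneg (r 0)).trans (hr 0 hN)
      positivity
  rcases subsingleton_or_nontrivial E with hE | hE
  · intro n hn
    have h0 : ∀ m : ℕ, y m - x m = (0:E) := fun m => Subsingleton.elim _ _
    simp only [h0, norm_zero]
    exact mul_nonneg (Real.exp_pos _).le
      (div_nonneg (by linarith) hD.le)
  -- nontrivial case
  have hL : 0 ≤ L := by
    obtain ⟨v, hv⟩ := exists_ne (0:E)
    have h1 := hf v 0
    have h2 : 0 < ‖v - 0‖ := by simpa [sub_zero] using norm_pos_iff.mpr hv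
    nlinarith [norm_nonneg (f v - f 0)]
  -- bound on the increments g k := y(k+1) - x(k+1) - exp(hA)(y k - x k)
  have hgbound : ∀ k < N,
      ‖y (k+1) - x (k+1) - NormedSpace.exp (h • A) (y k - x k)‖
        ≤ (3/2) * h * L * Mb * (‖y k - x k‖ + ‖y (k+1) - x (k+1)‖) + R := by
    intro k hk
    have hgk : y (k+1) - x (k+1) - NormedSpace.exp (h • A) (y k - x k)
        = h • (phiL (h • A)
            ((-(1/2 : ℝ)) • f (y k) + (2 : ℝ) • f ((1/2 : ℝ) • (y k + y (k + 1))) -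
              (1/2 : ℝ) • f (y (k + 1)))
          - phiL (h • A)
            ((-(1/2 : ℝ)) • f (x k) + (2 : ℝ) • f ((1/2 : ℝ) • (x k + x (k + 1))) -
              (1/2 : ℝ) • f (x (k + 1)))) + r k := by
      rw [map_sub]
      exact step_identity h _ _ _ _ _ _ _ (hy k hk) (hx k hk)
    have hPd : ‖(((-(1/2 : ℝ)) • f (y k) + (2 : ℝ) • f ((1/2 : ℝ) • (y k + y (k + 1))) -
            (1/2 : ℝ) • f (y (k + 1))) -
         ((-(1/2 : ℝ)) • f (x k) + (2 : ℝ) • f ((1/2 : ℝ) • (x k + x (k + 1))) -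
            (1/2 : ℝ) • f (x (k + 1))))‖
        ≤ (3/2) * L * (‖y k - x k‖ + ‖y (k+1) - x (k+1)‖) := by
      rw [K_decomp]
      have b1 : ‖f (y k) - f (x k)‖ ≤ L * ‖y k - x k‖ := hf _ _
      have b3 : ‖f (y (k+1)) - f (x (k+1))‖ ≤ L * ‖y (k+1) - x (k+1)‖ := hf _ _
      have b2 : ‖f ((1/2 : ℝ) • (y k + y (k + 1))) - f ((1/2 : ℝ) • (x k + x (k + 1)))‖
          ≤ L * ((1/2) * (‖y k - x k‖ + ‖y (k+1) - x (k+1)‖)) := by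
        refine (hf _ _).trans ?_
        rw [mid_decomp, norm_smul]
        have := norm_add_le (y k - x k) (y (k+1) - x (k+1))
        rw [Real.norm_eq_abs]
        have habs : |(1/2 : ℝ)| = 1/2 := by norm_num
        rw [habs]
        nlinarith
      refine (norm_sub_le _ _).trans ?_
      refine le_trans (add_le_add_left (norm_add_le _ _) _) ?_
      rw [norm_smul, norm_smul, norm_smul]
      simp only [Real.norm_eq_abs]
      have h1 : |(-(1/2) : ℝ)| = 1/2 := by norm_num
      have h2 : |(2 : ℝ)| = 2 := by norm_num
      have h3 : |(1/2 : ℝ)| = 1/2 := by norm_num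
      rw [h1, h2, h3]
      nlinarith
    rw [hgk]
    refine (norm_add_le _ _).trans ?_
    have hP : ‖h • (phiL (h • A)
            ((-(1/2 : ℝ)) • f (y k) + (2 : ℝ) • f ((1/2 : ℝ) • (y k + y (k + 1))) -
              (1/2 : ℝ) • f (y (k + 1)))
          - phiL (h • A)
            ((-(1/2 : ℝ)) • f (x k) + (2 : ℝ) • f ((1/2 : ℝ) • (x k + x (k + 1))) -
              (1/2 : ℝ) • f (x (k + 1))))‖
        ≤ h * (Mb * ((3/2) * L * (‖y k - x k‖ + ‖y (k+1) - x (k+1)‖))) := by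
      rw [norm_smul, Real.norm_eq_abs, abs_of_pos hh, ← map_sub]
      refine mul_le_mul_of_nonneg_left ?_ hh.le
      refine le_trans ((phiL (h • A)).le_opNorm _) ?_
      refine le_trans (mul_le_mul_of_nonneg_right hphi (norm_nonneg _)) ?_
      exact mul_le_mul_of_nonneg_left hPd hMb0.le
    have hrk := hr k hk
    nlinarith [hP, hrk]
  -- telescoping identity
  have htel : ∀ n ≤ N, y n - x n =
      NormedSpace.exp (((n : ℝ) * h) • A) (y 0 - x 0)
        + ∑ k ∈ Finset.range n,
            NormedSpace.exp ((((n - 1 - k : ℕ) : ℝ) * h) • A)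
              (y (k+1) - x (k+1) - NormedSpace.exp (h • A) (y k - x k)) := by
    intro n
    induction n with
    | zero =>
      intro _
      simp [NormedSpace.exp_zero]
    | succ n ih =>
      intro hn
      have hn' : n ≤ N := Nat.le_of_succ_le hn
      rw [Finset.sum_range_succ]
      have hzero : (n + 1 - 1 - n : ℕ) = 0 := by omega
      rw [hzero, Nat.cast_zero, zero_mul, zero_smul, NormedSpace.exp_zero,
        ContinuousLinearMap.one_apply]
      have hterm : ∀ k ∈ Finset.range n,
          NormedSpace.exp ((((n + 1 - 1 - k : ℕ) : ℝ) * h) • A)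
              (y (k+1) - x (k+1) - NormedSpace.exp (h • A) (y k - x k))
            = NormedSpace.exp (h • A)
                (NormedSpace.exp ((((n - 1 - k : ℕ) : ℝ) * h) • A)
                  (y (k+1) - x (k+1) - NormedSpace.exp (h • A) (y k - x k))) := by
        intro k hk
        have hk' : k < n := Finset.mem_range.mp hk
        have he : (n + 1 - 1 - k : ℕ) = (n - 1 - k) + 1 := by omega
        rw [he]
        exact (exp_comp A h (n - 1 - k) _).symm
      rw [Finset.sum_congr rfl hterm, ← map_sum, ← exp_comp A h n (y 0 - x 0),
        ← add_assoc, ← map_add, ← ih hn']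
      exact aux_eq_add_sub _ _
  -- norm recursion
  have hkey : ∀ n ≤ N, ‖y n - x n‖ ≤
      (Mb * ‖y 0 - x 0‖ + N * Mb * R) / (1 - (3/2) * h * L * Mb ^ 2)
        + (3 * h * L * Mb ^ 2 / (1 - (3/2) * h * L * Mb ^ 2))
            * ∑ k ∈ Finset.range n, ‖y k - x k‖ := by
    intro n hn
    have hnorm : ‖y n - x n‖ ≤ Mb * ‖y 0 - x 0‖
        + ∑ k ∈ Finset.range n,
            ((3/2) * h * L * Mb ^ 2 * (‖y k - x k‖ + ‖y (k+1) - x (k+1)‖) + Mb * R) := by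
      rw [htel n hn]
      refine (norm_add_le _ _).trans ?_
      have hA1 : ‖NormedSpace.exp (((n : ℝ) * h) • A) (y 0 - x 0)‖ ≤ Mb * ‖y 0 - x 0‖ := by
        refine le_trans (ContinuousLinearMap.le_opNorm _ _) ?_
        exact mul_le_mul_of_nonneg_right (hexp n hn) (norm_nonneg _)
      have hA2 : ‖∑ k ∈ Finset.range n,
          NormedSpace.exp ((((n - 1 - k : ℕ) : ℝ) * h) • A)
            (y (k+1) - x (k+1) - NormedSpace.exp (h • A) (y k - x k))‖
          ≤ ∑ k ∈ Finset.range n,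
            ((3/2) * h * L * Mb ^ 2 * (‖y k - x k‖ + ‖y (k+1) - x (k+1)‖) + Mb * R) := by
        refine (norm_sum_le _ _).trans ?_
        refine Finset.sum_le_sum fun k hk => ?_
        have hk' : k < n := Finset.mem_range.mp hk
        have hkN : k < N := lt_of_lt_of_le hk' hn
        have hjN : n - 1 - k ≤ N := le_trans (by omega) hn
        have hop : ‖NormedSpace.exp ((((n - 1 - k : ℕ) : ℝ) * h) • A)
            (y (k+1) - x (k+1) - NormedSpace.exp (h • A) (y k - x k))‖
            ≤ Mb * ‖y (k+1) - x (k+1) - NormedSpace.exp (h • A) (y k - x k)‖ := by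
          refine le_trans (ContinuousLinearMap.le_opNorm _ _) ?_
          exact mul_le_mul_of_nonneg_right (hexp _ hjN) (norm_nonneg _)
        refine hop.trans ?_
        have := hgbound k hkN
        nlinarith [norm_nonneg (y (k+1) - x (k+1) - NormedSpace.exp (h • A) (y k - x k))]
      linarith
    set S := ∑ k ∈ Finset.range n, ‖y k - x k‖ with hS
    have hT : ∑ k ∈ Finset.range n, ‖y (k+1) - x (k+1)‖ = S + ‖y n - x n‖ - ‖y 0 - x 0‖ := by
      have h1 := Finset.sum_range_succ (fun k => ‖y k - x k‖) n
      have h2 := Finset.sum_range_succ' (fun k => ‖y k - x k‖) n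
      rw [h1] at h2
      simp only [hS]
      linarith
    have hsplit : ∑ k ∈ Finset.range n,
        ((3/2) * h * L * Mb ^ 2 * (‖y k - x k‖ + ‖y (k+1) - x (k+1)‖) + Mb * R)
        = (3/2) * h * L * Mb ^ 2 * (S + (S + ‖y n - x n‖ - ‖y 0 - x 0‖)) + n * (Mb * R) := by
      rw [Finset.sum_add_distrib, Finset.sum_const, Finset.card_range, ← Finset.mul_sum,
        Finset.sum_add_distrib, hT, nsmul_eq_mul]
    rw [hsplit] at hnorm
    have hnN : (n:ℝ) * (Mb * R) ≤ (N:ℝ) * Mb * R := by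
      rcases Nat.eq_zero_or_pos N with hN0 | hN0
      · have hn0 : n = 0 := by omega
        rw [hn0, hN0]
        simp
      · have hR : 0 ≤ R := (norm_nonneg (r 0)).trans (hr 0 hN0)
        have hcast : (n:ℝ) ≤ (N:ℝ) := Nat.cast_le.mpr hn
        nlinarith [mul_nonneg (mul_nonneg (sub_nonneg.mpr hcast) hMb0.le) hR]
    have hSnn : 0 ≤ S := Finset.sum_nonneg fun k _ => norm_nonneg _
    have step : ‖y n - x n‖ ≤
        (Mb * ‖y 0 - x 0‖ + N * Mb * R + 3 * h * L * Mb ^ 2 * S)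
          / (1 - (3/2) * h * L * Mb ^ 2) := by
      rw [le_div_iff₀ hD]
      have hc : (0:ℝ) ≤ (3/2) * h * L * Mb ^ 2 := by positivity
      nlinarith [norm_nonneg (y 0 - x 0), norm_nonneg (y n - x n),
        mul_nonneg hc (norm_nonneg (y 0 - x 0))]
    refine step.trans (le_of_eq ?_)
    ring
  -- Gronwall
  have hb : 0 ≤ 3 * h * L * Mb ^ 2 / (1 - (3/2) * h * L * Mb ^ 2) := by positivity
  have hgr := gronwall_aux (fun n => ‖y n - x n‖)
    ((Mb * ‖y 0 - x 0‖ + N * Mb * R) / (1 - (3/2) * h * L * Mb ^ 2))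
    (3 * h * L * Mb ^ 2 / (1 - (3/2) * h * L * Mb ^ 2)) hb N
    (fun n => norm_nonneg _) hkey
  intro n hn
  have h1 := hgr n hn
  set a := (Mb * ‖y 0 - x 0‖ + N * Mb * R) / (1 - (3/2) * h * L * Mb ^ 2) with ha
  set b := 3 * h * L * Mb ^ 2 / (1 - (3/2) * h * L * Mb ^ 2) with hbdef
  have ha0 : 0 ≤ a := by
    apply div_nonneg _ hD.le
    have : 0 ≤ Mb * ‖y 0 - x 0‖ := by positivity
    linarith
  have hpow : (1+b)^n ≤ Real.exp (b * n) := by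
    have h2 : (1+b) ≤ Real.exp b := by
      have := Real.add_one_le_exp b
      linarith
    calc (1+b)^n ≤ (Real.exp b)^n := pow_le_pow_left₀ (by linarith) h2 n
      _ = Real.exp ((n:ℝ) * b) := by rw [← Real.exp_nat_mul]
      _ = Real.exp (b * n) := by ring_nf
  have hexpeq : b * (n:ℝ) = 3 * L * Mb ^ 2 * (n:ℝ) * h / (1 - (3/2) * h * L * Mb ^ 2) := by
    rw [hbdef]; ring
  calc ‖y n - x n‖ ≤ a * (1+b)^n := h1
    _ ≤ a * Real.exp (b * n) := mul_le_mul_of_nonneg_left hpow ha0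
    _ = Real.exp (3 * L * Mb ^ 2 * (n:ℝ) * h / (1 - (3/2) * h * L * Mb ^ 2)) * a := by
        rw [hexpeq]; ring
end

section
/- Quadratic-energy identity for exponential integrators: let M and Q be real d×d matrices with M symmetric (Mᵀ = M) and Q skew-symmetric (Qᵀ = −Q), let h ∈ ℝ and w, x ∈ ℝ^d, and set x' = exp(hQM)·x + h·φ(hQM)·Q·w. Then (1/2)x'ᵀMx' − (1/2)xᵀMx + (x' − x)ᵀw = 0. -/
open Matrix MeasureTheory

section AuxExpPhi
open NormedSpace
section Generic
variable {𝔸 : Type*} [NormedRing 𝔸] [NormedAlgebra ℝ 𝔸] [CompleteSpace 𝔸]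

noncomputable def Phi (A : 𝔸) : 𝔸 := ∫ s in (0:ℝ)..1, exp (s • A)

theorem contExpSmul (A : 𝔸) : Continuous fun s : ℝ => exp (s • A) :=
  by letI : NormedAlgebra ℚ 𝔸 := .restrictScalars ℚ ℝ 𝔸; exact exp_continuous.comp (by fun_prop)

theorem intExpSmul (A : 𝔸) (a b : ℝ) :
    IntervalIntegrable (fun s : ℝ => exp (s • A)) volume a b :=
  (contExpSmul A).intervalIntegrable a b

theorem Phi_eq' (A : 𝔸) : Phi A = ∫ τ in (0:ℝ)..1, exp ((1 - τ) • A) := by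
  have := intervalIntegral.integral_comp_sub_left (a := (0:ℝ)) (b := 1)
    (fun s : ℝ => exp (s • A)) 1
  simp only [sub_zero, sub_self] at this
  rw [Phi, ← this]

set_option linter.unusedSectionVars false

theorem mul_Phi_int (C A : 𝔸) : C * Phi A = ∫ s in (0:ℝ)..1, C * exp (s • A) := by
  have := (ContinuousLinearMap.mul ℝ 𝔸 C).intervalIntegral_comp_comm (intExpSmul A 0 1)
  simpa [Phi] using this.symm

theorem Phi_mul_int (C A : 𝔸) : Phi A * C = ∫ s in (0:ℝ)..1, exp (s • A) * C := by
  have := ((ContinuousLinearMap.mul ℝ 𝔸).flip C).intervalIntegral_comp_comm (intExpSmul A 0 1)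
  simpa [Phi] using this.symm

theorem mul_Phi (A : 𝔸) : A * Phi A = exp A - 1 := by
  rw [mul_Phi_int]
  have h1 : ∀ s ∈ Set.uIcc (0:ℝ) 1, HasDerivAt (fun t : ℝ => exp (t • A))
      (A * exp (s • A)) s := fun s _ => hasDerivAt_exp_smul_const' A s
  have := intervalIntegral.integral_eq_sub_of_hasDerivAt h1
    ((continuous_const.mul (contExpSmul A)).intervalIntegrable 0 1)
  rw [this]; simp

theorem Phi_mul (A : 𝔸) : Phi A * A = exp A - 1 := by
  rw [Phi_mul_int]
  have h1 : ∀ s ∈ Set.uIcc (0:ℝ) 1, HasDerivAt (fun t : ℝ => exp (t • A))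
      (exp (s • A) * A) s := fun s _ => hasDerivAt_exp_smul_const A s
  have := intervalIntegral.integral_eq_sub_of_hasDerivAt h1
    (((contExpSmul A).mul continuous_const).intervalIntegrable 0 1)
  rw [this]; simp

theorem Phi_mul_exp_neg (A : 𝔸) : Phi A * exp (-A) = Phi (-A) := by
  rw [Phi_mul_int]
  have h1 : ∀ s : ℝ, exp (s • A) * exp (-A) = exp ((1 - s) • (-A)) := by
    intro s
    letI : NormedAlgebra ℚ 𝔸 := .restrictScalars ℚ ℝ 𝔸
    rw [← exp_add_of_commute ((Commute.refl A).smul_left s).neg_right]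
    congr 1
    rw [smul_neg, sub_smul, one_smul, neg_sub]
    abel
  simp only [h1]
  have := intervalIntegral.integral_comp_sub_left (a := (0:ℝ)) (b := 1)
    (fun s : ℝ => exp (s • (-A))) 1
  simp only [sub_zero, sub_self] at this
  rw [this]; rfl

theorem exp_neg_mul_Phi (A : 𝔸) : exp (-A) * Phi A = Phi (-A) := by
  rw [mul_Phi_int]
  have h1 : ∀ s : ℝ, exp (-A) * exp (s • A) = exp ((1 - s) • (-A)) := by
    intro s
    letI : NormedAlgebra ℚ 𝔸 := .restrictScalars ℚ ℝ 𝔸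
    rw [← exp_add_of_commute ((Commute.refl A).smul_right s).neg_left]
    congr 1
    rw [smul_neg, sub_smul, one_smul, neg_sub]
    abel
  simp only [h1]
  have := intervalIntegral.integral_comp_sub_left (a := (0:ℝ)) (b := 1)
    (fun s : ℝ => exp (s • (-A))) 1
  simp only [sub_zero, sub_self] at this
  rw [this]; rfl

theorem intertwine_exp {m a b : 𝔸} (hc : m * a = b * m) :
    m * exp a = exp b * m := by
  have hpow : ∀ n : ℕ, m * a ^ n = b ^ n * m := by
    intro n
    induction n with
    | zero => simp
    | succ n ih => rw [pow_succ, ← mul_assoc, ih, mul_assoc, hc, pow_succ, mul_assoc]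
  have h1 := (ContinuousLinearMap.mul ℝ 𝔸 m).map_tsum (expSeries_summable' (𝕂 := ℝ) a)
  have h2 := ((ContinuousLinearMap.mul ℝ 𝔸).flip m).map_tsum (expSeries_summable' (𝕂 := ℝ) b)
  simp only [ContinuousLinearMap.mul_apply', ContinuousLinearMap.flip_apply] at h1 h2
  rw [exp_eq_tsum (𝕂 := ℝ)]
  show m * ∑' (n : ℕ), (n.factorial : ℝ)⁻¹ • a ^ n
      = (∑' (n : ℕ), (n.factorial : ℝ)⁻¹ • b ^ n) * m
  rw [h1, h2]
  congr 1
  funext n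
  rw [mul_smul_comm, smul_mul_assoc, hpow]

theorem intertwine_Phi {m a b : 𝔸} (hc : m * a = b * m) :
    m * Phi a = Phi b * m := by
  rw [mul_Phi_int, Phi_mul_int]
  apply intervalIntegral.integral_congr
  intro s _
  exact intertwine_exp (by rw [mul_smul_comm, hc, smul_mul_assoc])

end Generic


section AuxMatrix
variable {d : ℕ}

theorem dp_symm (S : Matrix (Fin d) (Fin d) ℝ) (a b : Fin d → ℝ) :
    a ⬝ᵥ (S *ᵥ b) = b ⬝ᵥ (Sᵀ *ᵥ a) := by
  rw [Matrix.dotProduct_mulVec, Matrix.mulVec_transpose, dotProduct_comm]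

theorem dp1 (A : Matrix (Fin d) (Fin d) ℝ) (a b : Fin d → ℝ) :
    (A *ᵥ a) ⬝ᵥ b = a ⬝ᵥ (Aᵀ *ᵥ b) := by
  rw [dotProduct_comm, dp_symm]

theorem dp3 (A S : Matrix (Fin d) (Fin d) ℝ) (a b : Fin d → ℝ) :
    (A *ᵥ a) ⬝ᵥ (S *ᵥ b) = a ⬝ᵥ ((Aᵀ * S) *ᵥ b) := by
  rw [dp1, Matrix.mulVec_mulVec]

end AuxMatrix
end AuxExpPhi

theorem stmt_9 {d : ℕ} (M Q : Matrix (Fin d) (Fin d) ℝ)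
    (hM : Mᵀ = M) (hQ : Qᵀ = -Q) (h : ℝ) (w x : Fin d → ℝ)
    (x' : Fin d → ℝ)
    (hx' : x' = NormedSpace.exp (h • (Q * M)) *ᵥ x +
        h • (phi (h • (Q * M)) *ᵥ (Q *ᵥ w))) :
    (1/2 : ℝ) * (x' ⬝ᵥ M *ᵥ x') - (1/2 : ℝ) * (x ⬝ᵥ M *ᵥ x) + (x' - x) ⬝ᵥ w = 0 := by
  open NormedSpace in
  letI : NormedRing (Matrix (Fin d) (Fin d) ℝ) := Matrix.linftyOpNormedRing
  letI : NormedAlgebra ℝ (Matrix (Fin d) (Fin d) ℝ) := Matrix.linftyOpNormedAlgebra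
  letI : NormedAlgebra ℚ (Matrix (Fin d) (Fin d) ℝ) := .restrictScalars ℚ ℝ _
  set B : Matrix (Fin d) (Fin d) ℝ := h • (Q * M) with hB
  set C : Matrix (Fin d) (Fin d) ℝ := h • (M * Q) with hC
  have hbridge : ∀ V : Matrix (Fin d) (Fin d) ℝ, phi V = Phi V := by
    intro V
    have hint :=
      (exp_continuous.comp (f := fun τ : ℝ => (1 - τ) • V) (by fun_prop)).intervalIntegrable
        (μ := MeasureTheory.volume) 0 1
    simp only [Function.comp_def] at hint
    ext i j
    let L0 : Matrix (Fin d) (Fin d) ℝ →ₗ[ℝ] ℝ :=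
      (LinearMap.proj (R := ℝ) (φ := fun _ : Fin d => ℝ) j).comp
        (LinearMap.proj (R := ℝ) (φ := fun _ : Fin d => Fin d → ℝ) i)
    let L : Matrix (Fin d) (Fin d) ℝ →L[ℝ] ℝ := LinearMap.toContinuousLinearMap L0
    have hL := L.intervalIntegral_comp_comm hint
    have hLa : ∀ A : Matrix (Fin d) (Fin d) ℝ, L A = A i j := fun _ => rfl
    have : phi V i j = ∫ τ in (0:ℝ)..1, L (exp ((1 - τ) • V)) := by
      simp only [hLa]; rfl
    rw [this, Phi_eq']
    exact hL
  have hphiT : ∀ V : Matrix (Fin d) (Fin d) ℝ, phi Vᵀ = (phi V)ᵀ := by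
    intro V
    ext i j
    show (∫ τ in (0:ℝ)..1, exp ((1 - τ) • Vᵀ) i j)
        = ∫ τ in (0:ℝ)..1, exp ((1 - τ) • V) j i
    congr 1
    funext τ
    rw [← Matrix.transpose_smul, Matrix.exp_transpose]
    rfl
  have hBt : Bᵀ = -C := by
    rw [hB, hC, Matrix.transpose_smul, Matrix.transpose_mul, hM, hQ]
    rw [Matrix.mul_neg, smul_neg]
  have hMB : M * B = C * M := by
    rw [hB, hC, Matrix.mul_smul, Matrix.smul_mul, Matrix.mul_assoc]
  have hQC : Q * C = B * Q := by
    rw [hB, hC, Matrix.mul_smul, Matrix.smul_mul, Matrix.mul_assoc]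
  have hQnC : Q * (-C) = (-B) * Q := by rw [Matrix.mul_neg, hQC, Matrix.neg_mul]
  have hMnB : M * (-B) = (-C) * M := by rw [Matrix.mul_neg, hMB, Matrix.neg_mul]
  set P : Matrix (Fin d) (Fin d) ℝ := phi B with hP
  set E : Matrix (Fin d) (Fin d) ℝ := exp B with hE
  set R : Matrix (Fin d) (Fin d) ℝ := h • (P * Q) with hR
  have hMP : M * P = phi C * M := by
    rw [hP, hbridge, hbridge]; exact intertwine_Phi hMB
  have k1 : M * R = exp C - 1 := by
    calc M * R = h • (M * P * Q) := by
          rw [hR, Matrix.mul_smul, Matrix.mul_assoc]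
      _ = h • (phi C * M * Q) := by rw [hMP]
      _ = phi C * C := by
          rw [hC, Matrix.mul_assoc, Matrix.mul_smul]
      _ = exp C - 1 := by rw [hbridge]; exact Phi_mul C
  have hexpT : Eᵀ = exp (-C) := by rw [hE, ← Matrix.exp_transpose, hBt]
  have hEE : exp (-C) * exp C = 1 := by
    have := exp_add_of_commute (Commute.refl C).neg_left
    rw [neg_add_cancel, exp_zero] at this
    exact this.symm
  have k3 : (Eᵀ * M) * R = 1 - Eᵀ := by
    rw [Matrix.mul_assoc, k1, hexpT, mul_sub, hEE, mul_one]
  have k4 : (Eᵀ * M) * E = M := by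
    have h1 : Eᵀ * M = M * exp (-B) := by
      rw [hexpT]; exact (intertwine_exp hMnB).symm
    have hBB : exp (-B) * exp B = 1 := by
      have := exp_add_of_commute ((Commute.refl B).neg_left)
      rw [neg_add_cancel, exp_zero] at this
      exact this.symm
    rw [h1, Matrix.mul_assoc, hE, hBB, mul_one]
  have hPt : Pᵀ = phi (-C) := by rw [hP, ← hphiT, hBt]
  have hQPhi : Q * phi (-C) = phi (-B) * Q := by
    rw [hbridge, hbridge]; exact intertwine_Phi hQnC
  have k5 : Rᵀ = -(h • (phi (-B) * Q)) := by
    rw [hR, Matrix.transpose_smul, Matrix.transpose_mul, hQ, hPt,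
      Matrix.neg_mul, hQPhi, smul_neg]
  have hQexpC : Q * exp C = exp B * Q := intertwine_exp hQC
  have hphineg : phi (-B) * E = phi B := by
    rw [hbridge, hbridge, hE]
    have := Phi_mul_exp_neg (-B)
    rw [neg_neg] at this
    exact this
  have k6 : (Rᵀ * M) * R = -(Rᵀ + R) := by
    have e1 : Rᵀ * M * R = Rᵀ * (M * R) := Matrix.mul_assoc _ _ _
    rw [e1, k1, k5, Matrix.neg_mul, Matrix.smul_mul, Matrix.mul_sub, mul_one,
      Matrix.mul_assoc, hQexpC, ← Matrix.mul_assoc, ← hE, hphineg]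
    rw [smul_sub, ← hP, ← hR]
    abel
  rw [Matrix.mulVec_mulVec, ← Matrix.smul_mulVec, ← hR] at hx'
  subst hx'
  have t11 : (E *ᵥ x) ⬝ᵥ M *ᵥ (E *ᵥ x) = x ⬝ᵥ M *ᵥ x := by
    rw [dp3, Matrix.mulVec_mulVec, k4]
  have t12 : (E *ᵥ x) ⬝ᵥ M *ᵥ (R *ᵥ w) = x ⬝ᵥ w - x ⬝ᵥ (Eᵀ *ᵥ w) := by
    rw [dp3, Matrix.mulVec_mulVec, k3, Matrix.sub_mulVec, Matrix.one_mulVec,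
      dotProduct_sub]
  have t21 : (R *ᵥ w) ⬝ᵥ M *ᵥ (E *ᵥ x) = x ⬝ᵥ w - x ⬝ᵥ (Eᵀ *ᵥ w) := by
    rw [dp3, Matrix.mulVec_mulVec, dp_symm,
      show ((Rᵀ * M) * E)ᵀ = (Eᵀ * M) * R by
        rw [Matrix.transpose_mul, Matrix.transpose_mul, Matrix.transpose_transpose, hM,
          Matrix.mul_assoc],
      k3, Matrix.sub_mulVec, Matrix.one_mulVec, dotProduct_sub]
  have t22 : (R *ᵥ w) ⬝ᵥ M *ᵥ (R *ᵥ w) = -(2 * (w ⬝ᵥ (R *ᵥ w))) := by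
    rw [dp3, Matrix.mulVec_mulVec, k6, Matrix.neg_mulVec, dotProduct_neg,
      Matrix.add_mulVec, dotProduct_add, dp_symm Rᵀ w w, Matrix.transpose_transpose]
    ring
  have ha : (E *ᵥ x + R *ᵥ w) ⬝ᵥ M *ᵥ (E *ᵥ x + R *ᵥ w)
      = x ⬝ᵥ M *ᵥ x + 2 * (x ⬝ᵥ w - x ⬝ᵥ (Eᵀ *ᵥ w)) - 2 * (w ⬝ᵥ (R *ᵥ w)) := by
    rw [Matrix.mulVec_add, dotProduct_add, add_dotProduct,
      add_dotProduct, t11, t12, t21, t22]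
    ring
  have hb : (E *ᵥ x + R *ᵥ w - x) ⬝ᵥ w
      = x ⬝ᵥ (Eᵀ *ᵥ w) - x ⬝ᵥ w + w ⬝ᵥ (R *ᵥ w) := by
    rw [sub_dotProduct, add_dotProduct, dp1,
      dotProduct_comm (R *ᵥ w) w]
    ring
  rw [ha, hb]
  ring
end

section
/- k-step quadratic-energy identity: let M and Q be real d×d matrices with M symmetric and Q skew-symmetric, let k be a positive integer, h ∈ ℝ, w, x ∈ ℝ^d, and set x' = exp(k h Q M)·x + k h·φ(k h Q M)·Q·w. Then (1/(2k))·x'ᵀMx' − (1/(2k))·xᵀMx + (1/k)·(x' − x)ᵀw = 0. -/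
open Matrix MeasureTheory
open scoped Nat

variable {d : ℕ}

lemma mul_exp_semiconj {A V W : Matrix (Fin d) (Fin d) ℝ} (h : A * V = W * A) :
    A * NormedSpace.exp V = NormedSpace.exp W * A := by
  letI : SeminormedRing (Matrix (Fin d) (Fin d) ℝ) := Matrix.linftyOpSemiNormedRing
  letI : NormedRing (Matrix (Fin d) (Fin d) ℝ) := Matrix.linftyOpNormedRing
  letI : NormedAlgebra ℝ (Matrix (Fin d) (Fin d) ℝ) := Matrix.linftyOpNormedAlgebra
  have hsem : SemiconjBy A V W := h
  simp only [NormedSpace.exp_eq_tsum ℝ]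
  calc A * (∑' (n : ℕ), ((n ! : ℝ)⁻¹) • V ^ n)
      = ∑' (n : ℕ), A * (((n ! : ℝ)⁻¹) • V ^ n) :=
        by
        have := ContinuousLinearMap.map_tsum
          (ContinuousLinearMap.mul ℝ (Matrix (Fin d) (Fin d) ℝ) A)
          (NormedSpace.expSeries_summable' (𝕂 := ℝ) V)
        simp only [ContinuousLinearMap.mul_apply'] at this; exact this
    _ = ∑' (n : ℕ), (((n ! : ℝ)⁻¹) • W ^ n) * A := by
        refine tsum_congr fun n => ?_
        rw [mul_smul_comm, smul_mul_assoc, (hsem.pow_right n).eq]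
    _ = (∑' (n : ℕ), ((n ! : ℝ)⁻¹) • W ^ n) * A :=
        by
        have := (ContinuousLinearMap.map_tsum
          ((ContinuousLinearMap.mul ℝ (Matrix (Fin d) (Fin d) ℝ)).flip A)
          (NormedSpace.expSeries_summable' (𝕂 := ℝ) W)).symm
        simp only [ContinuousLinearMap.flip_apply, ContinuousLinearMap.mul_apply'] at this; exact this

lemma continuous_exp_entry (V : Matrix (Fin d) (Fin d) ℝ) (i j : Fin d)
    (g : ℝ → ℝ) (hg : Continuous g) :
    Continuous fun τ : ℝ => NormedSpace.exp (g τ • V) i j := by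
  letI : SeminormedRing (Matrix (Fin d) (Fin d) ℝ) := Matrix.linftyOpSemiNormedRing
  letI : NormedRing (Matrix (Fin d) (Fin d) ℝ) := Matrix.linftyOpNormedRing
  letI : NormedAlgebra ℝ (Matrix (Fin d) (Fin d) ℝ) := Matrix.linftyOpNormedAlgebra
  letI : NormedAlgebra ℚ (Matrix (Fin d) (Fin d) ℝ) := NormedAlgebra.restrictScalars ℚ ℝ _
  have h1 : Continuous fun τ : ℝ => NormedSpace.exp (g τ • V) :=
    NormedSpace.exp_continuous.comp (hg.smul continuous_const)
  exact (continuous_apply j).comp ((continuous_apply i).comp h1)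

/-- The entry-extraction continuous linear map. -/
noncomputable def entryCLM (i j : Fin d) : Matrix (Fin d) (Fin d) ℝ →L[ℝ] ℝ where
  toFun X := X i j
  map_add' _ _ := rfl
  map_smul' _ _ := rfl
  cont := (continuous_apply j).comp (continuous_apply i)

lemma hasDerivAt_exp_entry (V : Matrix (Fin d) (Fin d) ℝ) (i j : Fin d) (t : ℝ) :
    HasDerivAt (fun τ : ℝ => -(NormedSpace.exp ((1 - τ) • V) i j))
      ((NormedSpace.exp ((1 - t) • V) * V) i j) t := by
  letI : SeminormedRing (Matrix (Fin d) (Fin d) ℝ) := Matrix.linftyOpSemiNormedRing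
  letI : NormedRing (Matrix (Fin d) (Fin d) ℝ) := Matrix.linftyOpNormedRing
  letI : NormedAlgebra ℝ (Matrix (Fin d) (Fin d) ℝ) := Matrix.linftyOpNormedAlgebra
  have h1 : HasDerivAt (fun u : ℝ => NormedSpace.exp (u • V))
      (NormedSpace.exp ((1 - t) • V) * V) (1 - t) :=
    hasDerivAt_exp_smul_const V (1 - t)
  have h2 : HasDerivAt (fun τ : ℝ => (1 : ℝ) - τ) (-1) t := by
    simpa using (hasDerivAt_id t).const_sub (1 : ℝ)
  have h3 : HasDerivAt (fun τ : ℝ => NormedSpace.exp ((1 - τ) • V))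
      ((-1 : ℝ) • (NormedSpace.exp ((1 - t) • V) * V)) t := h1.scomp t h2
  have h4 := ((entryCLM i j).hasFDerivAt.comp_hasDerivAt t h3)
  have h5 : HasDerivAt (fun τ : ℝ => NormedSpace.exp ((1 - τ) • V) i j)
      (((-1 : ℝ) • (NormedSpace.exp ((1 - t) • V) * V)) i j) t := h4
  have h6 := h5.neg
  simp only [Matrix.smul_apply, neg_smul, one_smul, neg_neg] at h6
  exact h6

lemma phi_mul_self (V : Matrix (Fin d) (Fin d) ℝ) :
    phi V * V = NormedSpace.exp V - 1 := by
  ext i j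
  have hint : ∀ l : Fin d, IntervalIntegrable
      (fun τ : ℝ => NormedSpace.exp ((1 - τ) • V) i l * V l j) MeasureTheory.volume 0 1 :=
    fun l => ((continuous_exp_entry V i l (fun τ => 1 - τ)
      (continuous_const.sub continuous_id)).mul continuous_const).intervalIntegrable 0 1
  have step1 : (phi V * V) i j
      = ∫ τ in (0:ℝ)..1, ∑ l, NormedSpace.exp ((1 - τ) • V) i l * V l j := by
    rw [Matrix.mul_apply]
    simp only [phi, Matrix.of_apply, ← intervalIntegral.integral_mul_const]
    rw [← intervalIntegral.integral_finset_sum (fun l _ => hint l)]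
  have step2 : ∀ τ : ℝ, (∑ l, NormedSpace.exp ((1 - τ) • V) i l * V l j)
      = (NormedSpace.exp ((1 - τ) • V) * V) i j := fun τ => (Matrix.mul_apply).symm
  rw [step1]
  simp_rw [step2]
  rw [intervalIntegral.integral_eq_sub_of_hasDerivAt
    (fun t _ => hasDerivAt_exp_entry V i j t) ?_]
  · simp only [sub_self, zero_smul, sub_zero, one_smul, NormedSpace.exp_zero,
      Matrix.sub_apply, Matrix.one_apply]
    ring
  · have : Continuous fun τ : ℝ => (NormedSpace.exp ((1 - τ) • V) * V) i j := by
      simp only [Matrix.mul_apply]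
      exact continuous_finset_sum _ fun l _ => (continuous_exp_entry V i l (fun τ => 1 - τ)
        (continuous_const.sub continuous_id)).mul continuous_const
    exact this.intervalIntegrable 0 1

lemma mul_phi_semiconj {A V W : Matrix (Fin d) (Fin d) ℝ} (h : A * V = W * A) :
    A * phi V = phi W * A := by
  ext i j
  have hsc : ∀ c : ℝ, A * (c • V) = (c • W) * A := fun c => by
    rw [mul_smul_comm, smul_mul_assoc, h]
  have hexp : ∀ c : ℝ, A * NormedSpace.exp (c • V) = NormedSpace.exp (c • W) * A :=
    fun c => mul_exp_semiconj (hsc c)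
  have hintV : ∀ l : Fin d, IntervalIntegrable
      (fun τ : ℝ => A i l * NormedSpace.exp ((1 - τ) • V) l j) MeasureTheory.volume 0 1 :=
    fun l => (continuous_const.mul (continuous_exp_entry V l j (fun τ => 1 - τ)
      (continuous_const.sub continuous_id))).intervalIntegrable 0 1
  have hintW : ∀ l : Fin d, IntervalIntegrable
      (fun τ : ℝ => NormedSpace.exp ((1 - τ) • W) i l * A l j) MeasureTheory.volume 0 1 :=
    fun l => ((continuous_exp_entry W i l (fun τ => 1 - τ)
      (continuous_const.sub continuous_id)).mul continuous_const).intervalIntegrable 0 1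
  have lhs : (A * phi V) i j
      = ∫ τ in (0:ℝ)..1, (A * NormedSpace.exp ((1 - τ) • V)) i j := by
    rw [Matrix.mul_apply]
    simp only [phi, Matrix.of_apply, ← intervalIntegral.integral_const_mul]
    rw [← intervalIntegral.integral_finset_sum (fun l _ => hintV l)]
    simp only [← Matrix.mul_apply]
  have rhs : (phi W * A) i j
      = ∫ τ in (0:ℝ)..1, (NormedSpace.exp ((1 - τ) • W) * A) i j := by
    rw [Matrix.mul_apply]
    simp only [phi, Matrix.of_apply, ← intervalIntegral.integral_mul_const]
    rw [← intervalIntegral.integral_finset_sum (fun l _ => hintW l)]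
    simp only [← Matrix.mul_apply]
  rw [lhs, rhs]
  congr 1
  ext τ
  rw [hexp (1 - τ)]

lemma phi_neg_mul_exp (X : Matrix (Fin d) (Fin d) ℝ) :
    phi (-X) * NormedSpace.exp X = phi X := by
  ext i j
  have hint : ∀ l : Fin d, IntervalIntegrable
      (fun τ : ℝ => NormedSpace.exp ((1 - τ) • (-X)) i l * NormedSpace.exp X l j)
      MeasureTheory.volume 0 1 :=
    fun l => ((continuous_exp_entry (-X) i l (fun τ => 1 - τ)
      (continuous_const.sub continuous_id)).mul continuous_const).intervalIntegrable 0 1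
  have lhs : (phi (-X) * NormedSpace.exp X) i j
      = ∫ τ in (0:ℝ)..1, (NormedSpace.exp ((1 - τ) • (-X)) * NormedSpace.exp X) i j := by
    rw [Matrix.mul_apply]
    simp only [phi, Matrix.of_apply, ← intervalIntegral.integral_mul_const]
    rw [← intervalIntegral.integral_finset_sum (fun l _ => hint l)]
    simp only [← Matrix.mul_apply]
  have key : ∀ τ : ℝ, NormedSpace.exp ((1 - τ) • (-X)) * NormedSpace.exp X
      = NormedSpace.exp ((1 - (1 - τ)) • X) := by
    intro τ
    have hc : Commute ((1 - τ) • (-X)) X := by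
      unfold Commute SemiconjBy
      rw [smul_mul_assoc, mul_smul_comm, neg_mul, mul_neg]
    rw [← Matrix.exp_add_of_commute _ _ hc]
    congr 1
    module
  rw [lhs]
  simp_rw [key]
  have := intervalIntegral.integral_comp_sub_left
    (fun u : ℝ => NormedSpace.exp (u • X) i j) 1 (a := 0) (b := 1)
  simp only [sub_self, sub_zero] at this
  calc (∫ τ in (0:ℝ)..1, NormedSpace.exp ((1 - (1 - τ)) • X) i j)
      = ∫ τ in (0:ℝ)..1, NormedSpace.exp (τ • X) i j := by
        congr 1; ext τ; rw [sub_sub_cancel]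
    _ = ∫ τ in (0:ℝ)..1, NormedSpace.exp ((1 - τ) • X) i j := by
        rw [← this]
    _ = phi X i j := rfl

lemma phi_transpose (V : Matrix (Fin d) (Fin d) ℝ) : (phi V)ᵀ = phi Vᵀ := by
  ext i j
  simp only [Matrix.transpose_apply, phi, Matrix.of_apply]
  congr 1
  ext τ
  rw [← Matrix.transpose_smul, Matrix.exp_transpose, Matrix.transpose_apply]

lemma quad (A B N : Matrix (Fin d) (Fin d) ℝ) (hN : Nᵀ = N)
    (h1 : Aᵀ * N * A = N) (h2 : Aᵀ * N * B = 1 - Aᵀ)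
    (h3 : Bᵀ * N * B + Bᵀ + B = 0) (x w : Fin d → ℝ) :
    (A *ᵥ x + B *ᵥ w) ⬝ᵥ N *ᵥ (A *ᵥ x + B *ᵥ w) - x ⬝ᵥ N *ᵥ x
      + 2 * ((A *ᵥ x + B *ᵥ w - x) ⬝ᵥ w) = 0 := by
  have key : ∀ (C : Matrix (Fin d) (Fin d) ℝ) (u v : Fin d → ℝ),
      (C *ᵥ u) ⬝ᵥ v = u ⬝ᵥ (Cᵀ *ᵥ v) := by
    intro C u v
    rw [dotProduct_comm, Matrix.dotProduct_mulVec, dotProduct_comm,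
      Matrix.mulVec_transpose]
  have hB : Bᵀ * N * B = -(Bᵀ + B) := by
    rw [add_assoc] at h3
    exact eq_neg_of_add_eq_zero_left h3
  have t1 : (A *ᵥ x) ⬝ᵥ N *ᵥ (A *ᵥ x) = x ⬝ᵥ N *ᵥ x := by
    rw [Matrix.mulVec_mulVec, key, Matrix.mulVec_mulVec, ← Matrix.mul_assoc, h1]
  have t2 : (A *ᵥ x) ⬝ᵥ N *ᵥ (B *ᵥ w) = x ⬝ᵥ w - x ⬝ᵥ (Aᵀ *ᵥ w) := by
    rw [Matrix.mulVec_mulVec, key, Matrix.mulVec_mulVec, ← Matrix.mul_assoc, h2,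
      Matrix.sub_mulVec, dotProduct_sub, Matrix.one_mulVec]
  have t3 : (B *ᵥ w) ⬝ᵥ N *ᵥ (A *ᵥ x) = x ⬝ᵥ w - x ⬝ᵥ (Aᵀ *ᵥ w) := by
    rw [Matrix.mulVec_mulVec, key, Matrix.mulVec_mulVec, ← Matrix.mul_assoc]
    rw [dotProduct_comm w, key]
    have htr : (Bᵀ * N * A)ᵀ = Aᵀ * N * B := by
      rw [Matrix.transpose_mul, Matrix.transpose_mul, Matrix.transpose_transpose, hN,
        Matrix.mul_assoc]
    rw [htr, h2, Matrix.sub_mulVec, dotProduct_sub, Matrix.one_mulVec]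
  have t4 : (B *ᵥ w) ⬝ᵥ N *ᵥ (B *ᵥ w) = -(w ⬝ᵥ (Bᵀ *ᵥ w)) - w ⬝ᵥ (B *ᵥ w) := by
    rw [Matrix.mulVec_mulVec, key, Matrix.mulVec_mulVec, ← Matrix.mul_assoc, hB,
      Matrix.neg_mulVec, Matrix.add_mulVec, dotProduct_neg, dotProduct_add]
    ring
  have t5 : (A *ᵥ x) ⬝ᵥ w = x ⬝ᵥ (Aᵀ *ᵥ w) := key A x w
  have t6 : (B *ᵥ w) ⬝ᵥ w = w ⬝ᵥ (Bᵀ *ᵥ w) := key B w w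
  have t7 : w ⬝ᵥ (B *ᵥ w) = w ⬝ᵥ (Bᵀ *ᵥ w) := by
    rw [dotProduct_comm]; exact key B w w
  simp only [Matrix.mulVec_add, dotProduct_add, add_dotProduct,
    sub_dotProduct]
  rw [t1, t2, t3, t4, t5, t6, t7]
  ring

theorem stmt_16 {d : ℕ} (M Q : Matrix (Fin d) (Fin d) ℝ)
    (hM : Mᵀ = M) (hQ : Qᵀ = -Q)
    (k : ℕ) (hk : 0 < k) (h : ℝ) (w x : Fin d → ℝ)
    (x' : Fin d → ℝ)
    (hx' : x' = NormedSpace.exp (((k : ℝ) * h) • (Q * M)) *ᵥ x +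
        ((k : ℝ) * h) • (phi (((k : ℝ) * h) • (Q * M)) *ᵥ (Q *ᵥ w))) :
    (1 / (2 * (k : ℝ))) * (x' ⬝ᵥ M *ᵥ x') - (1 / (2 * (k : ℝ))) * (x ⬝ᵥ M *ᵥ x) +
      (1 / (k : ℝ)) * ((x' - x) ⬝ᵥ w) = 0 := by
  set s : ℝ := (k : ℝ) * h with hs
  set V : Matrix (Fin d) (Fin d) ℝ := s • (Q * M) with hV
  set X : Matrix (Fin d) (Fin d) ℝ := s • (M * Q) with hX
  set A : Matrix (Fin d) (Fin d) ℝ := NormedSpace.exp V with hA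
  set B : Matrix (Fin d) (Fin d) ℝ := s • (phi V * Q) with hB
  -- rewrite x'
  have hxB : x' = A *ᵥ x + B *ᵥ w := by
    rw [hx', hB, Matrix.smul_mulVec, Matrix.mulVec_mulVec]
  -- basic matrix identities
  have hVt : Vᵀ = -X := by
    rw [hV, hX, Matrix.transpose_smul, Matrix.transpose_mul, hM, hQ, Matrix.mul_neg, smul_neg]
  have hAt : Aᵀ = NormedSpace.exp (-X) := by
    rw [hA, ← Matrix.exp_transpose, hVt]
  have hMV : M * V = X * M := by
    rw [hV, hX, mul_smul_comm, smul_mul_assoc, Matrix.mul_assoc]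
  have hQX : Q * X = V * Q := by
    rw [hV, hX, mul_smul_comm, smul_mul_assoc, Matrix.mul_assoc]
  have hMA : M * A = NormedSpace.exp X * M := mul_exp_semiconj hMV
  have hQPhiX : Q * phi X = phi V * Q := mul_phi_semiconj hQX
  have hexpinv : NormedSpace.exp (-X) * NormedSpace.exp X = 1 := by
    rw [← Matrix.exp_add_of_commute _ _ ((Commute.refl X).neg_left), neg_add_cancel,
      NormedSpace.exp_zero]
  have hMB : M * B = NormedSpace.exp X - 1 := by
    calc M * B = s • (M * (phi V * Q)) := mul_smul_comm s M (phi V * Q)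
      _ = s • (M * phi V * Q) := by rw [Matrix.mul_assoc]
      _ = s • (phi X * M * Q) := by rw [mul_phi_semiconj hMV]
      _ = s • (phi X * (M * Q)) := by rw [Matrix.mul_assoc]
      _ = phi X * (s • (M * Q)) := (mul_smul_comm s (phi X) (M * Q)).symm
      _ = NormedSpace.exp X - 1 := phi_mul_self X
  have h1 : Aᵀ * M * A = M := by
    rw [hAt, Matrix.mul_assoc, hMA, ← Matrix.mul_assoc, hexpinv, Matrix.one_mul]
  have h2 : Aᵀ * M * B = 1 - Aᵀ := by
    rw [hAt, Matrix.mul_assoc, hMB, Matrix.mul_sub, Matrix.mul_one, hexpinv]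
  have hBt : Bᵀ = -(s • (Q * phi (-X))) := by
    rw [hB, Matrix.transpose_smul, Matrix.transpose_mul, hQ, phi_transpose, hVt,
      Matrix.neg_mul, smul_neg]
  have hBQ : B = s • (Q * phi X) := by rw [hB, hQPhiX]
  have h3 : Bᵀ * M * B + Bᵀ + B = 0 := by
    have e1 : Bᵀ * M * B = -(s • (Q * (phi X - phi (-X)))) := by
      rw [Matrix.mul_assoc, hMB, hBt, Matrix.neg_mul, smul_mul_assoc, Matrix.mul_assoc,
        Matrix.mul_sub, Matrix.mul_one, phi_neg_mul_exp]
    rw [e1, hBt, hBQ, Matrix.mul_sub, smul_sub]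
    abel
  have main : (x' ⬝ᵥ M *ᵥ x') - (x ⬝ᵥ M *ᵥ x) + 2 * ((x' - x) ⬝ᵥ w) = 0 := by
    rw [hxB]
    exact quad A B M hM h1 h2 h3 x w
  have hk' : (k : ℝ) ≠ 0 := Nat.cast_ne_zero.mpr hk.ne'
  rw [sub_dotProduct] at main
  field_simp
  linear_combination main + 2 * sub_dotProduct x' x w
end

section
/- Symmetry of the multistep (polarized) EKahan scheme: let A be a real d×d matrix, k a positive integer, h ∈ ℝ, and G : (ℝ^d)^{k+1} → ℝ^d a map that is invariant under reversal of its arguments, i.e. G(z_0, z_1, …, z_k) = G(z_k, z_{k−1}, …, z_0) for all arguments. Then a tuple (x_0, x_1, …, x_k) of vectors in ℝ^d satisfies x_k = exp(k h A)·x_0 + k h·φ(k h A)·G(x_0, …, x_k) if and only if the reversed tuple with step −h satisfies x_0 = exp(−k h A)·x_k + (−k h)·φ(−k h A)·G(x_k, …, x_0). In particular, the generalized EKahan scheme with the polarized discrete gradient, which is invariant under reversal of arguments, is a symmetric method. -/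
open Matrix MeasureTheory

lemma exp_cont_entry {d : ℕ} (V : Matrix (Fin d) (Fin d) ℝ) (c : ℝ) (i j : Fin d) :
    Continuous fun τ : ℝ => NormedSpace.exp ((c - τ) • V) i j := by
  letI : SeminormedRing (Matrix (Fin d) (Fin d) ℝ) := Matrix.linftyOpSemiNormedRing
  letI : NormedRing (Matrix (Fin d) (Fin d) ℝ) := Matrix.linftyOpNormedRing
  letI : NormedAlgebra ℝ (Matrix (Fin d) (Fin d) ℝ) := Matrix.linftyOpNormedAlgebra
  letI : NormedAlgebra ℚ (Matrix (Fin d) (Fin d) ℝ) := NormedAlgebra.restrictScalars ℚ ℝ _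
  have : Continuous fun τ : ℝ => NormedSpace.exp ((c - τ) • V) :=
    NormedSpace.exp_continuous.comp (((continuous_const.sub continuous_id).smul continuous_const))
  exact this.matrix_elem i j

lemma exp_neg_mul_phi {d : ℕ} (V : Matrix (Fin d) (Fin d) ℝ) :
    NormedSpace.exp (-V) * phi V = phi (-V) := by
  ext i j
  simp only [Matrix.mul_apply, phi, Matrix.of_apply]
  have h1 : ∀ l : Fin d, NormedSpace.exp (-V) i l * ∫ τ in (0:ℝ)..1,
      NormedSpace.exp ((1 - τ) • V) l j
      = ∫ τ in (0:ℝ)..1, NormedSpace.exp (-V) i l * NormedSpace.exp ((1 - τ) • V) l j :=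
    fun l => (intervalIntegral.integral_const_mul _ _).symm
  simp only [h1]
  rw [← intervalIntegral.integral_finset_sum (f := fun l τ => NormedSpace.exp (-V) i l * NormedSpace.exp ((1 - τ) • V) l j) (fun l _ =>
    ((continuous_const.mul (exp_cont_entry V 1 l j)).intervalIntegrable 0 1))]
  have key : ∀ τ : ℝ, ∑ l, NormedSpace.exp (-V) i l * NormedSpace.exp ((1 - τ) • V) l j
      = NormedSpace.exp ((0 - τ) • V) i j := by
    intro τ
    have hc : Commute (-V) ((1 - τ) • V) := (Commute.refl V).neg_left.smul_right _
    rw [← Matrix.mul_apply, ← Matrix.exp_add_of_commute _ _ hc]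
    have he : -V + (1 - τ) • V = (0 - τ) • V := by module
    rw [he]
  simp only [key]
  have h2 : ∀ τ : ℝ, NormedSpace.exp ((1 - τ) • -V) i j
      = NormedSpace.exp ((0 - (1 - τ)) • V) i j := by
    intro τ
    have he : (1 - τ) • -V = (0 - (1 - τ)) • V := by module
    rw [he]
  simp only [h2]
  rw [intervalIntegral.integral_comp_sub_left (fun s => NormedSpace.exp ((0 - s) • V) i j) 1]
  norm_num

lemma exp_neg_mul_exp {d : ℕ} (V : Matrix (Fin d) (Fin d) ℝ) :
    NormedSpace.exp (-V) * NormedSpace.exp V = 1 := by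
  rw [← Matrix.exp_add_of_commute _ _ (Commute.refl V).neg_left, neg_add_cancel,
    NormedSpace.exp_zero]

lemma aux_step {d : ℕ} (E E' P P' : Matrix (Fin d) (Fin d) ℝ)
    (hEE : E' * E = 1) (hP : E' * P = P') (c : ℝ) (u v g : Fin d → ℝ)
    (hu : u = E *ᵥ v + c • (P *ᵥ g)) : v = E' *ᵥ u + (-c) • (P' *ᵥ g) := by
  subst hu
  rw [Matrix.mulVec_add, Matrix.mulVec_mulVec, hEE, Matrix.one_mulVec,
    Matrix.mulVec_smul, Matrix.mulVec_mulVec, hP, neg_smul]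
  abel

theorem stmt_17 {d k : ℕ} (hk : 0 < k)
    (A : Matrix (Fin d) (Fin d) ℝ) (h : ℝ)
    (G : (Fin (k + 1) → (Fin d → ℝ)) → (Fin d → ℝ))
    (hG : ∀ z : Fin (k + 1) → (Fin d → ℝ), G (z ∘ Fin.rev) = G z)
    (x : Fin (k + 1) → (Fin d → ℝ)) :
    (x (Fin.last k) = NormedSpace.exp (((k : ℝ) * h) • A) *ᵥ x 0 +
        ((k : ℝ) * h) • (phi (((k : ℝ) * h) • A) *ᵥ G x)) ↔
    (x 0 = NormedSpace.exp ((-((k : ℝ) * h)) • A) *ᵥ x (Fin.last k) +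
        (-((k : ℝ) * h)) • (phi ((-((k : ℝ) * h)) • A) *ᵥ G (x ∘ Fin.rev))) := by
  set c : ℝ := (k : ℝ) * h with hc
  set V : Matrix (Fin d) (Fin d) ℝ := c • A with hV
  have hnV : (-c) • A = -V := by rw [neg_smul]
  rw [hG x, hnV]
  constructor
  · intro h1
    exact aux_step (NormedSpace.exp V) (NormedSpace.exp (-V)) (phi V) (phi (-V))
      (exp_neg_mul_exp V) (exp_neg_mul_phi V) c _ _ _ h1
  · intro h1
    have h2 := aux_step (NormedSpace.exp (-V)) (NormedSpace.exp V) (phi (-V)) (phi V)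
      (by simpa using exp_neg_mul_exp (-V)) (by simpa using exp_neg_mul_phi (-V)) (-c) _ _ _ h1
    simpa using h2
end
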